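/- Let P(z) = z⁴ − z and Q(z) = z⁴ + z. There exists a unique strictly increasing real analytic diffeomorphism φ : ℝ → ℝ (i.e. φ is real analytic, strictly increasing, bijective, and its inverse is real analytic) such that P(z) = Q(φ(z)) for all z ∈ ℝ. Moreover, for this φ: the derivative φ′ is bounded on ℝ, the function z ↦ φ(z) − z·φ′(z) is bounded on ℝ, and φ(z)/z → 1 as z → +∞ and as z → −∞. -/

import Mathlib

open Filter Topology

noncomputable section

/-- A strictly increasing real analytic diffeomorphism of the real line: real analytic,
strictly increasing, bijective, with real analytic inverse. -/
def IsAnalyticDiffeo (φ : ℝ → ℝ) : Prop :=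
  (∀ x : ℝ, AnalyticAt ℝ φ x) ∧ StrictMono φ ∧ Function.Bijective φ ∧
    ∃ ψ : ℝ → ℝ, (∀ x : ℝ, AnalyticAt ℝ ψ x) ∧
      Function.LeftInverse ψ φ ∧ Function.RightInverse ψ φ

open Real

lemma myAnalyticAt_log {x : ℝ} (hx : 0 < x) : AnalyticAt ℝ Real.log x := by
  have h' : fderiv ℝ Real.exp (Real.expPartialHomeomorph.symm x) =
      (ContinuousLinearEquiv.unitsEquivAut ℝ
        (Units.mk0 (Real.exp (Real.expPartialHomeomorph.symm x)) (Real.exp_ne_zero _)) :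
        ℝ ≃L[ℝ] ℝ) := by
    apply ContinuousLinearMap.ext_ring
    simp [(Real.hasDerivAt_exp _).hasFDerivAt.fderiv]
  have := Real.expPartialHomeomorph.analyticAt_symm (a := x)
    (by simpa using hx) analyticAt_rexp h'
  exact this

/-- positive-argument cube root -/
def cb (x : ℝ) : ℝ := Real.exp (Real.log x / 3)

lemma cb_pos (x : ℝ) : 0 < cb x := Real.exp_pos _

lemma cb_cube {x : ℝ} (hx : 0 < x) : (cb x)^3 = x := by
  rw [cb, ← Real.exp_nat_mul]
  push_cast
  rw [mul_div_cancel₀ _ (by norm_num : (3:ℝ) ≠ 0), Real.exp_log hx]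

lemma cb_mul {x y : ℝ} (hx : 0 < x) (hy : 0 < y) : cb x * cb y = cb (x * y) := by
  rw [cb, cb, cb, ← Real.exp_add, Real.log_mul hx.ne' hy.ne']
  ring_nf

lemma cb_analyticAt {f : ℝ → ℝ} {x : ℝ} (hf : AnalyticAt ℝ f x) (hfx : 0 < f x) :
    AnalyticAt ℝ (fun y => cb (f y)) x := by
  unfold cb
  exact (analyticAt_rexp.comp (((myAnalyticAt_log hfx).comp hf).div analyticAt_const (by norm_num)))

def qq (z : ℝ) : ℝ := 1 - (20/27) * z^3
def gg (z : ℝ) : ℝ := (qq z)^2/4 + (8/729) * z^6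
def ss (z : ℝ) : ℝ := Real.exp (Real.log (gg z) / 2)
def ee (z : ℝ) : ℝ := ss z + qq z / 2
def phi0 (z : ℝ) : ℝ := z/3 + z^2 * cb ((8/729) / ee z) - cb (ee z)

lemma gg_pos (z : ℝ) : 0 < gg z := by
  rcases eq_or_ne z 0 with rfl | hz
  · norm_num [gg, qq]
  · have h6 : 0 < z^6 := by positivity
    have : (0:ℝ) ≤ (qq z)^2/4 := by positivity
    unfold gg; nlinarith

lemma ss_pos (z : ℝ) : 0 < ss z := Real.exp_pos _

lemma ss_sq (z : ℝ) : (ss z)^2 = gg z := by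
  rw [ss, ← Real.exp_nat_mul]
  push_cast
  rw [mul_div_cancel₀ _ (by norm_num : (2:ℝ) ≠ 0), Real.exp_log (gg_pos z)]

lemma ee_pos (z : ℝ) : 0 < ee z := by
  rcases eq_or_ne z 0 with rfl | hz
  · have h := ss_sq 0
    have hs := ss_pos 0
    simp only [gg, qq] at h
    norm_num at h
    unfold ee qq
    nlinarith
  · have h6 : 0 < z^6 := by positivity
    have h := ss_sq z
    have hs := ss_pos z
    unfold ee
    unfold gg at h
    nlinarith [sq_nonneg (ss z - qq z / 2), sq_nonneg (ss z + qq z / 2)]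

lemma c89 : cb ((8:ℝ)/729) = 2/9 := by
  have h9 : ((2:ℝ)/9)^3 = 8/729 := by norm_num
  rw [cb, ← h9, Real.log_pow]
  push_cast
  rw [mul_div_cancel_left₀ _ (by norm_num : (3:ℝ) ≠ 0),
    Real.exp_log (by norm_num : (0:ℝ) < 2/9)]

lemma hK0 (z : ℝ) : (phi0 z)^3 - z*(phi0 z)^2 + z^2*(phi0 z) - z^3 + 1 = 0 := by
  have hea : 0 < (8:ℝ)/729 / ee z := div_pos (by norm_num) (ee_pos z)
  set β := cb (ee z) with hβ
  set α := z^2 * cb ((8:ℝ)/729/ee z) with hα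
  have hβ3 : β^3 = ee z := cb_cube (ee_pos z)
  have hca : (cb ((8:ℝ)/729/ee z))^3 = (8:ℝ)/729/ee z := cb_cube hea
  have hα3 : (ee z) * α^3 = (8/729) * z^6 := by
    have h : α^3 = z^6 * ((8:ℝ)/729/ee z) := by
      rw [hα, mul_pow, hca]; ring
    rw [h]; field_simp [(ee_pos z).ne']
  have hαβ : α * β = (2/9) * z^2 := by
    have h1 : (8:ℝ)/729/ee z * ee z = (8:ℝ)/729 := div_mul_cancel₀ _ (ee_pos z).ne'
    rw [hα, hβ, mul_assoc, cb_mul hea (ee_pos z), h1, c89]; ring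
  have hee2 : (ee z)^2 = (8/729)*z^6 + qq z * ee z := by
    have h := ss_sq z
    unfold gg at h
    unfold ee
    linear_combination h
  have hdiff : α^3 - β^3 = -(1 - (20/27)*z^3) := by
    have h0 : ee z * (α^3 - β^3 + (1 - (20/27)*z^3)) = 0 := by
      have hq : qq z = 1 - (20/27)*z^3 := rfl
      linear_combination hα3 - ee z * hβ3 - hee2 - (ee z) * hq
    have h1 := (mul_eq_zero.mp h0).resolve_left (ee_pos z).ne'
    linarith
  have hphi : phi0 z = z/3 + α - β := rfl
  rw [hphi]
  linear_combination hdiff + (3*β - 3*α) * hαβ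

-- K strict mono in w
lemma K_mono {z w1 w2 : ℝ} (h : w1 < w2) :
    w1^3 - z*w1^2 + z^2*w1 - z^3 + 1 < w2^3 - z*w2^2 + z^2*w2 - z^3 + 1 := by
  nlinarith [sq_nonneg (w1 + w2 - 2*z), sq_nonneg (w1 + w2), sq_nonneg (w2 - w1),
    mul_pos (sub_pos.2 h) (mul_pos (sub_pos.2 h) (sub_pos.2 h)),
    mul_nonneg (sub_pos.2 h).le (sq_nonneg (w1 + w2 - 2*z)),
    mul_nonneg (sub_pos.2 h).le (sq_nonneg (w1 + w2))]

lemma K_anti {z1 z2 w : ℝ} (h : z1 < z2) :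
    w^3 - z2*w^2 + z2^2*w - z2^3 + 1 < w^3 - z1*w^2 + z1^2*w - z1^3 + 1 := by
  nlinarith [mul_pos (sub_pos.2 h) (mul_pos (sub_pos.2 h) (sub_pos.2 h)),
    mul_nonneg (sub_pos.2 h).le (sq_nonneg (z1 + z2 - 2*w)),
    mul_nonneg (sub_pos.2 h).le (sq_nonneg (z1 + z2))]

lemma K_unique {z w1 w2 : ℝ} (h1 : w1^3 - z*w1^2 + z^2*w1 - z^3 + 1 = 0)
    (h2 : w2^3 - z*w2^2 + z^2*w2 - z^3 + 1 = 0) : w1 = w2 := by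
  rcases lt_trichotomy w1 w2 with h | h | h
  · exact absurd (h1 ▸ h2 ▸ K_mono (z := z) h) (lt_irrefl 0)
  · exact h
  · exact absurd (h1 ▸ h2 ▸ K_mono (z := z) h) (lt_irrefl 0)

-- points on the curve are away from origin
lemma K_far {z w : ℝ} (h : w^3 - z*w^2 + z^2*w - z^3 + 1 = 0) : 1/2 ≤ z^2 + w^2 := by
  have key : (z - w) * (z^2 + w^2) = 1 := by linear_combination -h
  by_contra hlt
  push_neg at hlt
  have h1 : (z - w)^2 ≤ 2*(z^2 + w^2) := by nlinarith [sq_nonneg (z + w)]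
  have h2 : 0 ≤ z^2 + w^2 := by positivity
  have k2 : ((z - w) * (z^2 + w^2))^2 = 1 := by rw [key]; norm_num
  have h3 := mul_le_mul_of_nonneg_right h1 (mul_nonneg h2 h2)
  nlinarith [k2, h3, mul_le_mul_of_nonneg_right hlt.le (mul_nonneg h2 h2),
    mul_le_mul_of_nonneg_right hlt.le h2]

lemma gg_analytic (x : ℝ) : AnalyticAt ℝ gg x := by
  unfold gg qq
  exact (((analyticAt_const.sub (analyticAt_const.mul ((analyticAt_id).pow 3))).pow 2).div
    analyticAt_const (by norm_num)).add (analyticAt_const.mul ((analyticAt_id).pow 6))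

lemma ee_analytic (x : ℝ) : AnalyticAt ℝ ee x := by
  unfold ee ss
  apply AnalyticAt.add
  · exact analyticAt_rexp.comp
      (((myAnalyticAt_log (gg_pos x)).comp (gg_analytic x)).div analyticAt_const (by norm_num))
  · unfold qq
    exact (analyticAt_const.sub (analyticAt_const.mul ((analyticAt_id).pow 3))).div
      analyticAt_const (by norm_num)

lemma phi0_analytic (x : ℝ) : AnalyticAt ℝ phi0 x := by
  unfold phi0
  apply AnalyticAt.sub
  apply AnalyticAt.add
  · exact (analyticAt_id).div analyticAt_const (by norm_num)
  · exact ((analyticAt_id).pow 2).mul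
      (cb_analyticAt ((analyticAt_const.div (ee_analytic x) (ee_pos x).ne'))
        (div_pos (by norm_num) (ee_pos x)))
  · exact cb_analyticAt (ee_analytic x) (ee_pos x)

lemma phi0_cont : Continuous phi0 :=
  continuous_iff_continuousAt.2 fun x => (phi0_analytic x).continuousAt

lemma phi0_mono : StrictMono phi0 := by
  intro z1 z2 h
  have h1 := hK0 z1
  have h2 := hK0 z2
  have h3 : (phi0 z1)^3 - z2*(phi0 z1)^2 + z2^2*(phi0 z1) - z2^3 + 1 < 0 := by
    have := K_anti (w := phi0 z1) h
    linarith
  by_contra hle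
  push_neg at hle
  rcases eq_or_lt_of_le hle with heq | hlt
  · rw [heq] at h2; linarith
  · have := K_mono (z := z2) hlt
    linarith

-- |phi0 z - z| ≤ 2
lemma phi0_near (z : ℝ) : |phi0 z - z| ≤ 2 := by
  have h := hK0 z
  have key : (z - phi0 z) * (z^2 + (phi0 z)^2) = 1 := by linear_combination -h
  have hf := K_far h
  have hpos : (0:ℝ) < z^2 + (phi0 z)^2 := by linarith [sq_nonneg z, sq_nonneg (phi0 z)]
  have : phi0 z - z = -(1 / (z^2 + (phi0 z)^2)) := by
    field_simp
    linarith [key]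
  rw [this, abs_neg, abs_div, abs_one]
  rw [abs_of_pos hpos]
  rw [div_le_iff₀ hpos]
  linarith

lemma K_near {z w : ℝ} (h : w^3 - z*w^2 + z^2*w - z^3 + 1 = 0) : |w - z| ≤ 2 := by
  have key : (z - w) * (z^2 + w^2) = 1 := by linear_combination -h
  have hf := K_far h
  have hpos : (0:ℝ) < z^2 + w^2 := by linarith [sq_nonneg z, sq_nonneg w]
  have heq : w - z = -(1 / (z^2 + w^2)) := by
    field_simp
    linarith [key]
  rw [heq, abs_neg, abs_div, abs_one, abs_of_pos hpos, div_le_iff₀ hpos]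
  linarith

lemma phi0_tendsto_top : Tendsto phi0 atTop atTop := by
  apply tendsto_atTop_mono (f := fun z => z - 2)
  · intro z
    have := phi0_near z
    rw [abs_le] at this
    linarith [this.1]
  · exact tendsto_atTop_add_const_right _ (-2) tendsto_id

lemma phi0_tendsto_bot : Tendsto phi0 atBot atBot := by
  apply tendsto_atBot_mono (f := fun z => z + 2)
  · intro z
    have := phi0_near z
    rw [abs_le] at this
    linarith [this.2]
  · exact tendsto_atBot_add_const_right _ 2 tendsto_id

lemma phi0_surj : Function.Surjective phi0 :=
  Continuous.surjective phi0_cont phi0_tendsto_top phi0_tendsto_bot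

def psi0 (y : ℝ) : ℝ := -phi0 (-y)

lemma psi0_analytic (x : ℝ) : AnalyticAt ℝ psi0 x := by
  unfold psi0
  exact ((phi0_analytic (-x)).comp ((analyticAt_id).neg)).neg

lemma psi0_right : Function.RightInverse psi0 phi0 := by
  intro y
  have hKw := hK0 (-y)
  have h1 : y^3 - (psi0 y)*y^2 + (psi0 y)^2*y - (psi0 y)^3 + 1 = 0 := by
    unfold psi0
    linear_combination hKw
  exact K_unique (hK0 (psi0 y)) h1

lemma psi0_left : Function.LeftInverse psi0 phi0 := by
  intro z
  have := psi0_right (phi0 z)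
  exact phi0_mono.injective this

lemma phi0_diffeo : IsAnalyticDiffeo phi0 :=
  ⟨phi0_analytic, phi0_mono, ⟨phi0_mono.injective, phi0_surj⟩,
    psi0, psi0_analytic, psi0_left, psi0_right⟩

lemma phi0_eq (z : ℝ) : z ^ 4 - z = (phi0 z) ^ 4 + phi0 z := by
  linear_combination (-(phi0 z) - z) * hK0 z

-- any solution satisfies the cubic
lemma Keq_of {φ : ℝ → ℝ} (hd : IsAnalyticDiffeo φ)
    (heq : ∀ z : ℝ, z ^ 4 - z = (φ z) ^ 4 + φ z) (z : ℝ) :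
    (φ z)^3 - z*(φ z)^2 + z^2*(φ z) - z^3 + 1 = 0 := by
  obtain ⟨han, hmono, -, -⟩ := hd
  have hc : Continuous φ := continuous_iff_continuousAt.2 fun x => (han x).continuousAt
  have hfac : ∀ y : ℝ, (φ y + y) * ((φ y)^3 - y*(φ y)^2 + y^2*(φ y) - y^3 + 1) = 0 := by
    intro y
    linear_combination (-1 : ℝ) * heq y
  by_contra hne
  have hKcont : Continuous (fun y : ℝ => (φ y)^3 - y*(φ y)^2 + y^2*(φ y) - y^3 + 1) := by
    have := hc
    fun_prop
  have hU : IsOpen {y : ℝ | (φ y)^3 - y*(φ y)^2 + y^2*(φ y) - y^3 + 1 ≠ 0} :=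
    IsOpen.preimage hKcont isOpen_compl_singleton
  obtain ⟨ε, hε, hball⟩ := Metric.isOpen_iff.1 hU z hne
  have hneg : ∀ y ∈ Metric.ball z ε, φ y = -y := by
    intro y hy
    have h1 := hball hy
    have h2 := (mul_eq_zero.mp (hfac y)).resolve_right h1
    linarith
  have hz1 : φ z = -z := hneg z (Metric.mem_ball_self hε)
  have hz2 : φ (z + ε/2) = -(z + ε/2) := by
    apply hneg
    rw [Metric.mem_ball, Real.dist_eq]
    rw [abs_of_pos (by linarith : (0:ℝ) < z + ε/2 - z)]
    linarith
  have := hmono (show z < z + ε/2 by linarith)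
  rw [hz1, hz2] at this
  linarith

lemma deriv_formula {φ : ℝ → ℝ} (han : ∀ x : ℝ, AnalyticAt ℝ φ x)
    (hK : ∀ z : ℝ, (φ z)^3 - z*(φ z)^2 + z^2*(φ z) - z^3 + 1 = 0) (z : ℝ) :
    (3*(φ z)^2 - 2*z*(φ z) + z^2) * deriv φ z = (φ z)^2 - 2*z*(φ z) + 3*z^2 := by
  have hd : HasDerivAt φ (deriv φ z) z := ((han z).differentiableAt).hasDerivAt
  have hG := ((((hd.pow 3).sub ((hasDerivAt_id z).mul (hd.pow 2))).add
      (((hasDerivAt_id z).pow 2).mul hd)).sub ((hasDerivAt_id z).pow 3)).add_const 1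
  have hfun : (fun y : ℝ => (φ y)^3 - y*(φ y)^2 + y^2*(φ y) - y^3 + 1) = fun _ => (0:ℝ) :=
    funext hK
  simp only [id_eq, Pi.pow_apply, Pi.mul_apply, Pi.sub_apply, Pi.add_apply] at hG
  rw [show (fun x : ℝ => φ x ^ 3 - x * φ x ^ 2 + x ^ 2 * φ x - x ^ 3 + 1) = fun _ => (0:ℝ)
    from hfun] at hG
  have h0 := hG.unique (hasDerivAt_const z 0)
  push_cast at h0
  linear_combination h0

lemma D_lb {φ : ℝ → ℝ}
    (hK : ∀ z : ℝ, (φ z)^3 - z*(φ z)^2 + z^2*(φ z) - z^3 + 1 = 0) (z : ℝ) :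
    (1:ℝ)/6 ≤ 3*(φ z)^2 - 2*z*(φ z) + z^2 := by
  have hf := K_far (hK z)
  nlinarith [sq_nonneg (4*(φ z) - (3/2)*z), sq_nonneg (φ z - z), sq_nonneg (φ z + z)]

lemma deriv_bound {φ : ℝ → ℝ} (han : ∀ x : ℝ, AnalyticAt ℝ φ x)
    (hK : ∀ z : ℝ, (φ z)^3 - z*(φ z)^2 + z^2*(φ z) - z^3 + 1 = 0) (z : ℝ) :
    |deriv φ z| ≤ 4 := by
  have hD := D_lb hK z
  have hform := deriv_formula han hK z
  have hN : (0:ℝ) ≤ (φ z)^2 - 2*z*(φ z) + 3*z^2 := by nlinarith [sq_nonneg (φ z - z), sq_nonneg z]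
  have hN4 : (φ z)^2 - 2*z*(φ z) + 3*z^2 ≤ 4 * (3*(φ z)^2 - 2*z*(φ z) + z^2) := by
    nlinarith [sq_nonneg (3*(φ z) - z), sq_nonneg (φ z)]
  rw [abs_le]
  constructor
  · nlinarith
  · nlinarith

lemma sub_bound {φ : ℝ → ℝ} (han : ∀ x : ℝ, AnalyticAt ℝ φ x)
    (hK : ∀ z : ℝ, (φ z)^3 - z*(φ z)^2 + z^2*(φ z) - z^3 + 1 = 0) (z : ℝ) :
    |φ z - z * deriv φ z| ≤ 18 := by
  have hD := D_lb hK z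
  have hform := deriv_formula han hK z
  have hDX : (3*(φ z)^2 - 2*z*(φ z) + z^2) * (φ z - z * deriv φ z) = -3 := by
    linear_combination (-z) * hform + 3 * hK z
  rw [abs_le]
  constructor
  · nlinarith
  · nlinarith

lemma tendsto_top {φ : ℝ → ℝ}
    (hK : ∀ z : ℝ, (φ z)^3 - z*(φ z)^2 + z^2*(φ z) - z^3 + 1 = 0) :
    Tendsto (fun z : ℝ => φ z / z) atTop (𝓝 1) := by
  have h0 : Tendsto (fun z : ℝ => φ z / z - 1) atTop (𝓝 0) := by
    apply squeeze_zero_norm' (a := fun z : ℝ => 2 / z)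
    · filter_upwards [eventually_ge_atTop (1:ℝ)] with z hz
      have hz0 : (0:ℝ) < z := by linarith
      have hb := K_near (hK z)
      rw [Real.norm_eq_abs]
      have : φ z / z - 1 = (φ z - z) / z := by field_simp
      rw [this, abs_div, abs_of_pos hz0, div_le_div_iff_of_pos_right hz0]
      exact hb
    · exact tendsto_const_nhds.div_atTop tendsto_id
  have := h0.add_const 1
  simpa using this

lemma tendsto_bot {φ : ℝ → ℝ}
    (hK : ∀ z : ℝ, (φ z)^3 - z*(φ z)^2 + z^2*(φ z) - z^3 + 1 = 0) :
    Tendsto (fun z : ℝ => φ z / z) atBot (𝓝 1) := by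
  have h0 : Tendsto (fun z : ℝ => φ z / z - 1) atBot (𝓝 0) := by
    apply squeeze_zero_norm' (a := fun z : ℝ => 2 / (-z))
    · filter_upwards [eventually_le_atBot (-1:ℝ)] with z hz
      have hz0 : (0:ℝ) < -z := by linarith
      have hb := K_near (hK z)
      rw [Real.norm_eq_abs]
      have hzne : z ≠ 0 := by linarith
      have h1 : φ z / z - 1 = (φ z - z) / z := by
        field_simp
      have h2 : |φ z / z - 1| = |φ z - z| / (-z) := by
        rw [h1, abs_div, abs_of_neg (by linarith : z < 0)]
      rw [h2, div_le_div_iff_of_pos_right hz0]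
      exact hb
    · have : Tendsto (fun z : ℝ => -z) atBot atTop := tendsto_neg_atBot_atTop
      exact tendsto_const_nhds.div_atTop this
  have := h0.add_const 1
  simpa using this


/-- There is a unique increasing real analytic diffeomorphism `φ` of `ℝ` with
`z⁴ − z = φ(z)⁴ + φ(z)`; moreover `φ′` and `φ − z·φ′` are globally bounded and
`φ(z)/z → 1` as `z → ±∞`. -/
theorem stmt16 :
    (∃! φ : ℝ → ℝ, IsAnalyticDiffeo φ ∧ ∀ z : ℝ, z ^ 4 - z = (φ z) ^ 4 + φ z) ∧
    ∀ φ : ℝ → ℝ, IsAnalyticDiffeo φ → (∀ z : ℝ, z ^ 4 - z = (φ z) ^ 4 + φ z) →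
      (∃ C : ℝ, ∀ z : ℝ, |deriv φ z| ≤ C) ∧
      (∃ C : ℝ, ∀ z : ℝ, |φ z - z * deriv φ z| ≤ C) ∧
      Filter.Tendsto (fun z : ℝ => φ z / z) Filter.atTop (𝓝 1) ∧
      Filter.Tendsto (fun z : ℝ => φ z / z) Filter.atBot (𝓝 1) := by
  constructor
  · refine ⟨phi0, ⟨phi0_diffeo, phi0_eq⟩, ?_⟩
    rintro φ ⟨hd, heq⟩
    exact funext fun z => K_unique (Keq_of hd heq z) (hK0 z)
  · intro φ hd heq
    have hK := Keq_of hd heq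
    have han := hd.1
    exact ⟨⟨4, deriv_bound han hK⟩, ⟨18, sub_bound han hK⟩, tendsto_top hK, tendsto_bot hK⟩
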